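/- arXiv:1710.05290 — 8 statements merged into one kernel-verified Lean document; each statement's English description precedes it below -/
import Mathlib

section
/- Let (K, α) be a Z₂-simplicial complex on a vertex type V and let G = (W, E) be a graph. If f : V → W is a graph homomorphism from Csorba's graph A(K, α) to G, then the map Φ(f) : V → W × W defined by Φ(f)(v) = (f(v), f(α(v))) is a Z₂-simplicial map from (K, α) to the box complex B(G); that is, for every simplex σ ∈ K the image Φ(f)(σ) is a simplex of B(G), and Φ(f)(α(v)) = swap(Φ(f)(v)) for every v ∈ V. -/
/-- A (finite abstract) simplicial complex on a vertex type `V`: a set of nonempty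
finite subsets of `V`, closed under nonempty subsets and containing all singletons. -/
def IsComplex {V : Type*} (K : Set (Finset V)) : Prop :=
  (∀ σ ∈ K, σ.Nonempty) ∧ (∀ σ ∈ K, ∀ τ : Finset V, τ ⊆ σ → τ.Nonempty → τ ∈ K) ∧
    (∀ v : V, ({v} : Finset V) ∈ K)

/-- A Z₂-simplicial complex: a simplicial complex together with a simplicial involution. -/
def IsZ2Complex {V : Type*} [DecidableEq V] (K : Set (Finset V)) (α : V → V) : Prop :=
  IsComplex K ∧ (∀ v, α (α v) = v) ∧ (∀ σ ∈ K, σ.image α ∈ K)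

/-- The box complex `B(G)` of a graph `G = (W, E)`: simplices are the nonempty finite
subsets `σ` of `W × W` such that `E a b'` and `E a' b` hold for all `(a,b), (a',b') ∈ σ`.
Its involution is `Prod.swap`. -/
def BoxCpx {W : Type*} (E : W → W → Prop) : Set (Finset (W × W)) :=
  {σ | σ.Nonempty ∧ ∀ p ∈ σ, ∀ q ∈ σ, E p.1 q.2 ∧ E q.1 p.2}

/-- A Z₂-simplicial map from `(K, α)` to `(L, β)`. -/
def IsZ2Map {V W : Type*} [DecidableEq W] (K : Set (Finset V)) (α : V → V)
    (L : Set (Finset W)) (β : W → W) (f : V → W) : Prop :=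
  (∀ σ ∈ K, σ.image f ∈ L) ∧ (∀ v, f (α v) = β (f v))

/-- If `f` is a graph homomorphism from Csorba's graph `A(K, α)` to `G = (W, E)`,
then `Φ(f) : v ↦ (f v, f (α v))` is a Z₂-simplicial map from `(K, α)` to `B(G)`. -/
theorem stmt0 {V W : Type*} [DecidableEq V] [DecidableEq W]
    (K : Set (Finset V)) (α : V → V) (hK : IsZ2Complex K α)
    (E : W → W → Prop) (hEsymm : ∀ a b : W, E a b → E b a)
    (f : V → W)
    (hf : ∀ v w : V, ({α v, w} : Finset V) ∈ K → E (f v) (f w)) :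
    IsZ2Map K α (BoxCpx E) Prod.swap (fun v => (f v, f (α v))) := by
  obtain ⟨⟨hne, hsub, hsing⟩, hinv, himg⟩ := hK
  constructor
  · intro σ hσ
    refine ⟨(hne σ hσ).image _, ?_⟩
    intro p hp q hq
    simp only [Finset.mem_image] at hp hq
    obtain ⟨v, hv, rfl⟩ := hp
    obtain ⟨w, hw, rfl⟩ := hq
    have key : ∀ a b : V, a ∈ σ → b ∈ σ → E (f a) (f (α b)) := by
      intro a b ha hb
      apply hf
      have h1 : ({a, b} : Finset V) ∈ K := by
        refine hsub σ hσ _ ?_ ⟨a, Finset.mem_insert_self _ _⟩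
        intro x hx
        rcases Finset.mem_insert.1 hx with rfl | hx
        · exact ha
        · rwa [Finset.mem_singleton.1 hx]
      have h2 := himg _ h1
      simpa [Finset.image_insert] using h2
    exact ⟨key v w hv hw, key w v hw hv⟩
  · intro v
    simp [hinv v]
end

section
/- Let (K, α) be a Z₂-simplicial complex on a vertex type V and let G = (W, E) be a graph. If g : V → W × W is a Z₂-simplicial map from (K, α) to the box complex B(G), then the map Ψ(g) : V → W sending v to the first coordinate of g(v) is a graph homomorphism from Csorba's graph A(K, α) to G; that is, for all v, w ∈ V with {α(v), w} ∈ K, the vertices Ψ(g)(v) and Ψ(g)(w) are adjacent in G. -/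
/-- If `g` is a Z₂-simplicial map from `(K, α)` to the box complex `B(G)` of `G = (W, E)`,
then `Ψ(g) : v ↦ (g v).1` is a graph homomorphism from Csorba's graph `A(K, α)` to `G`:
whenever `v` and `w` are adjacent in `A(K, α)` (i.e. `{α v, w} ∈ K`), the vertices
`(g v).1` and `(g w).1` are adjacent in `G`. -/
theorem stmt1 {V W : Type*} [DecidableEq V] [DecidableEq W]
    (K : Set (Finset V)) (α : V → V) (hK : IsZ2Complex K α)
    (E : W → W → Prop) (hEsymm : ∀ a b : W, E a b → E b a)
    (g : V → W × W)
    (hg : IsZ2Map K α (BoxCpx E) Prod.swap g) :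
    ∀ v w : V, ({α v, w} : Finset V) ∈ K → E (g v).1 (g w).1 := by
  intro v w hmem
  obtain ⟨hmap, hcomm⟩ := hg
  have him := hmap _ hmem
  obtain ⟨-, hadj⟩ := him
  have h1 : g (α v) ∈ ({α v, w} : Finset V).image g := by
    apply Finset.mem_image_of_mem; simp
  have h2 : g w ∈ ({α v, w} : Finset V).image g := by
    apply Finset.mem_image_of_mem; simp
  have := (hadj _ h1 _ h2).2
  rw [hcomm v] at this
  exact hEsymm _ _ this
end

section
/- Let (K, α) be a Z₂-simplicial complex on a vertex type V and let G = (W, E) be a graph. The assignments Φ(f)(v) = (f(v), f(α(v))) and Ψ(g)(v) = (g(v)).1 are mutually inverse: for every graph homomorphism f from A(K, α) to G one has Ψ(Φ(f)) = f, and for every Z₂-simplicial map g from (K, α) to B(G) one has Φ(Ψ(g)) = g. In particular, Φ is a bijection between graph homomorphisms A(K, α) → G and Z₂-simplicial maps (K, α) → B(G) (the adjunction between Csorba's functor A and the box complex functor B). -/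
/-- The assignments `Φ(f)(v) = (f v, f (α v))` and `Ψ(g)(v) = (g v).1` are mutually
inverse between graph homomorphisms `A(K, α) → G` and Z₂-simplicial maps `(K, α) → B(G)`;
in particular `Φ` is a bijection between these two sets of maps. -/
theorem stmt2 {V W : Type*} [DecidableEq V] [DecidableEq W]
    (K : Set (Finset V)) (α : V → V) (hK : IsZ2Complex K α)
    (E : W → W → Prop) (hEsymm : ∀ a b : W, E a b → E b a) :
    (∀ f : V → W, (∀ v w : V, ({α v, w} : Finset V) ∈ K → E (f v) (f w)) →
      (fun v => (((f v, f (α v)) : W × W)).1) = f) ∧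
    (∀ g : V → W × W, IsZ2Map K α (BoxCpx E) Prod.swap g →
      (fun v => (((g v).1, (g (α v)).1) : W × W)) = g) ∧
    Set.BijOn (fun (f : V → W) => (fun v => ((f v, f (α v)) : W × W)))
      {f : V → W | ∀ v w : V, ({α v, w} : Finset V) ∈ K → E (f v) (f w)}
      {g : V → W × W | IsZ2Map K α (BoxCpx E) Prod.swap g} := by

  obtain ⟨⟨hne, hsub, hsing⟩, hinv, himg⟩ := hK
  have part2 : ∀ g : V → W × W, IsZ2Map K α (BoxCpx E) Prod.swap g →
      (fun v => (((g v).1, (g (α v)).1) : W × W)) = g := by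
    intro g hg
    funext v
    simp [hg.2 v]
  refine ⟨fun f _ => rfl, part2, ?_, ?_, ?_⟩
  · intro f hf
    refine ⟨?_, ?_⟩
    · intro σ hσ
      refine ⟨(hne σ hσ).image _, ?_⟩
      intro p hp q hq
      simp only [Finset.mem_image] at hp hq
      obtain ⟨v, hv, rfl⟩ := hp
      obtain ⟨w, hw, rfl⟩ := hq
      have hvw : ({α v, α w} : Finset V) ∈ K := by
        have h1 : ({v, w} : Finset V) ∈ K := by
          refine hsub σ hσ _ ?_ (by simp)
          intro x hx
          simp only [Finset.mem_insert, Finset.mem_singleton] at hx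
          rcases hx with rfl | rfl <;> assumption
        simpa [Finset.image_insert] using himg _ h1
      exact ⟨hf v (α w) hvw, hf w (α v) (by rwa [Finset.pair_comm] at hvw)⟩
    · intro v
      simp [hinv v, Prod.ext_iff]
  · intro f hf f' hf' h
    funext v
    exact congrArg Prod.fst (congrFun h v)
  · intro g hg
    refine ⟨fun v => (g v).1, ?_, ?_⟩
    · intro v w hvw
      obtain ⟨-, hE⟩ := hg.1 _ hvw
      have h1 := (hE (g (α v)) (Finset.mem_image_of_mem g (by simp))
        (g w) (Finset.mem_image_of_mem g (by simp))).2
      rw [hg.2 v] at h1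
      exact hEsymm _ _ h1
    · exact part2 g hg
end

section
/- Let (K, α) be a Z₂-simplicial complex on a vertex type V and let G = (W, E) be a graph. There exists a graph homomorphism from Csorba's graph A(K, α) to G if and only if there exists a Z₂-simplicial map from (K, α) to the box complex B(G). -/
/-- There exists a graph homomorphism from Csorba's graph `A(K, α)` to `G = (W, E)`
if and only if there exists a Z₂-simplicial map from `(K, α)` to the box complex `B(G)`. -/
theorem stmt3 {V W : Type*} [DecidableEq V] [DecidableEq W]
    (K : Set (Finset V)) (α : V → V) (hK : IsZ2Complex K α)
    (E : W → W → Prop) (hEsymm : ∀ a b : W, E a b → E b a) :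
    (∃ f : V → W, ∀ v w : V, ({α v, w} : Finset V) ∈ K → E (f v) (f w)) ↔
    (∃ g : V → W × W, IsZ2Map K α (BoxCpx E) Prod.swap g) := by
  obtain ⟨⟨hne, hsub, hsingle⟩, hinv, himg⟩ := hK
  constructor
  · rintro ⟨f, hf⟩
    refine ⟨fun v => (f v, f (α v)), ?_, ?_⟩
    · intro σ hσ
      refine ⟨(hne σ hσ).image _, ?_⟩
      rintro p hp q hq
      simp only [Finset.mem_image] at hp hq
      obtain ⟨v, hv, rfl⟩ := hp
      obtain ⟨w, hw, rfl⟩ := hq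
      have hpair : ({α v, α w} : Finset V) ∈ K := by
        apply hsub _ (himg σ hσ)
        · intro x hx
          simp only [Finset.mem_insert, Finset.mem_singleton] at hx
          rcases hx with h | h <;> simp only [Finset.mem_image]
          · exact ⟨v, hv, h.symm⟩
          · exact ⟨w, hw, h.symm⟩
        · exact ⟨α v, by simp⟩
      have hpair' : ({α w, α v} : Finset V) ∈ K := by
        rwa [Finset.pair_comm]
      exact ⟨hf _ _ hpair, hf _ _ hpair'⟩
    · intro v; simp [hinv]
  · rintro ⟨g, hg, hcomm⟩
    refine ⟨fun v => (g v).1, ?_⟩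
    intro v w hvw
    have h2 : ({v, α w} : Finset V) ∈ K := by
      apply hsub _ (himg _ hvw)
      · intro x hx
        simp only [Finset.mem_insert, Finset.mem_singleton] at hx
        rcases hx with h | h <;> simp only [Finset.mem_image, Finset.mem_insert,
          Finset.mem_singleton]
        · exact ⟨α v, Or.inl rfl, by rw [h, hinv]⟩
        · exact ⟨w, Or.inr rfl, h.symm⟩
      · exact ⟨v, by simp⟩
    obtain ⟨-, h⟩ := hg _ h2
    have hp : g v ∈ ({v, α w} : Finset V).image g :=
      Finset.mem_image_of_mem g (by simp)
    have hq : g (α w) ∈ ({v, α w} : Finset V).image g :=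
      Finset.mem_image_of_mem g (by simp)
    have := (h _ hp _ hq).1
    rwa [hcomm] at this
end

section
/- Let G₁ and G₂ be groups with surjective group homomorphisms ε₁ : G₁ → ℤ/2ℤ and ε₂ : G₂ → ℤ/2ℤ, and let P be the subgroup {(x, y) ∈ G₁ × G₂ : ε₁(x) = ε₂(y)} of G₁ × G₂. Suppose f : P → ℤ is a group homomorphism such that for every (x, y) ∈ P, f(x, y) is even if and only if ε₁(x) = 0. Then there exists a group homomorphism g : G₁ → ℤ such that for every x ∈ G₁, g(x) is even if and only if ε₁(x) = 0, or there exists a group homomorphism g : G₂ → ℤ such that for every y ∈ G₂, g(y) is even if and only if ε₂(y) = 0. -/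
theorem auxstmt9 {G₁ G₂ : Type*} [Group G₁] [Group G₂]
    (ε₁ : G₁ → ZMod 2) (ε₂ : G₂ → ZMod 2)
    (hε₁ : ∀ a b : G₁, ε₁ (a * b) = ε₁ a + ε₁ b)
    (hε₂ : ∀ a b : G₂, ε₂ (a * b) = ε₂ a + ε₂ b)
    (f : G₁ × G₂ → ℤ)
    (hf : ∀ p q : G₁ × G₂, ε₁ p.1 = ε₂ p.2 → ε₁ q.1 = ε₂ q.2 → f (p * q) = f p + f q)
    (hpar : ∀ p : G₁ × G₂, ε₁ p.1 = ε₂ p.2 → (Even (f p) ↔ ε₁ p.1 = 0))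
    (v : G₂) (hv : ε₂ v = 1) (hc : f (1, v * v) % 4 = 0) :
    ∃ g : G₁ → ℤ, (∀ a b : G₁, g (a * b) = g a + g b) ∧
      ∀ x : G₁, Even (g x) ↔ ε₁ x = 0 := by
  have two : ∀ a : ZMod 2, a + a = 0 := by decide
  have cases2 : ∀ a : ZMod 2, a = 0 ∨ a = 1 := by decide
  have e1one : ε₁ (1 : G₁) = 0 := by
    have h := hε₁ 1 1
    rw [one_mul] at h
    have h2 : ∀ a : ZMod 2, a = a + a → a = 0 := by decide
    exact h2 _ h
  have e2one : ε₂ (1 : G₂) = 0 := by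
    have h := hε₂ 1 1
    rw [one_mul] at h
    have h2 : ∀ a : ZMod 2, a = a + a → a = 0 := by decide
    exact h2 _ h
  have ed1 : ∀ x : G₁, ε₁ (x * x) = 0 := fun x => by rw [hε₁]; exact two _
  have ed2 : ∀ y : G₂, ε₂ (y * y) = 0 := fun y => by rw [hε₂]; exact two _
  -- key additivity : f (a*b*(a*b), 1) = f (a*a, 1) + f (b*b, 1)
  have key : ∀ a b : G₁, f (a * b * (a * b), 1) = f (a * a, 1) + f (b * b, 1) := by
    intro a b
    set s : G₂ := if ε₁ a = 0 then 1 else v with hs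
    set t : G₂ := if ε₁ b = 0 then 1 else v with ht
    have hsa : ε₂ s = ε₁ a := by
      rw [hs]; rcases cases2 (ε₁ a) with h | h <;> simp [h, e2one, hv]
    have htb : ε₂ t = ε₁ b := by
      rw [ht]; rcases cases2 (ε₁ b) with h | h <;> simp [h, e2one, hv]
    have hst : s * t = t * s := by
      rw [hs, ht]; split_ifs <;> simp
    have hab : ε₁ (a * b) = ε₂ (s * t) := by rw [hε₁, hε₂, hsa, htb]
    have h1 : f ((a, s) * (b, t) * ((a, s) * (b, t)))
        = (f (a, s) + f (b, t)) + (f (a, s) + f (b, t)) := by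
      rw [hf _ _ hab hab, hf _ _ hsa.symm htb.symm]
    have h2 : f ((a, s) * (a, s) * ((b, t) * (b, t)))
        = (f (a, s) + f (a, s)) + (f (b, t) + f (b, t)) := by
      have haa : ε₁ (a * a) = ε₂ (s * s) := by rw [hε₁, hε₂, hsa]
      have hbb : ε₁ (b * b) = ε₂ (t * t) := by rw [hε₁, hε₂, htb]
      rw [hf _ _ haa hbb, hf _ _ hsa.symm hsa.symm, hf _ _ htb.symm htb.symm]
    have hmul1 : ((a, s) : G₁ × G₂) * (b, t) * ((a, s) * (b, t))
        = (a * b * (a * b), s * t * (s * t)) := rfl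
    have hmul2 : ((a, s) : G₁ × G₂) * (a, s) * ((b, t) * (b, t))
        = (a * a * (b * b), s * s * (t * t)) := rfl
    have hcomm : s * t * (s * t) = s * s * (t * t) := by
      rw [mul_assoc s t (s * t), ← mul_assoc t s t, ← hst, mul_assoc, mul_assoc]
    have heq : f (a * b * (a * b), s * t * (s * t)) = f (a * a * (b * b), s * s * (t * t)) := by
      rw [← hmul1, ← hmul2, h1, h2]; ring
    have hst0 : ε₂ (s * t * (s * t)) = 0 := by rw [hε₂, hε₂]; exact two _
    have hsstt0 : ε₂ (s * s * (t * t)) = 0 := by rw [hε₂, ed2, ed2]; simp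
    have split1 : f (a * b * (a * b), s * t * (s * t))
        = f (a * b * (a * b), 1) + f (1, s * t * (s * t)) := by
      have h := hf (a * b * (a * b), 1) (1, s * t * (s * t))
        (by simp [ed1, e2one]) (by simp [e1one, hst0])
      simpa using h
    have split2 : f (a * a * (b * b), s * s * (t * t))
        = f (a * a, 1) + f (b * b, 1) + f (1, s * s * (t * t)) := by
      have h := hf (a * a * (b * b), 1) (1, s * s * (t * t))
        (by simp [ed1, hε₁, two, e2one]) (by simp [e1one, hsstt0])
      have h' := hf (a * a, 1) (b * b, 1) (by simp [ed1, e2one]) (by simp [ed1, e2one])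
      simp only [Prod.mk_mul_mk, one_mul, mul_one] at h h'
      rw [h, h']
    have hsstteq : f (1, s * t * (s * t)) = f (1, s * s * (t * t)) := by rw [hcomm]
    rw [split1, split2, hsstteq] at heq
    omega
  -- evenness of f (x*x, 1)
  have hEv : ∀ x : G₁, Even (f (x * x, 1)) := by
    intro x
    exact (hpar (x * x, 1) (by simp [ed1, e2one])).2 (ed1 x)
  -- the candidate homomorphism
  refine ⟨fun x => f (x * x, 1) / 2, ?_, ?_⟩ <;> simp only
  · intro a b
    have h2 : ∀ x : G₁, 2 * (f (x * x, 1) / 2) = f (x * x, 1) :=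
      fun x => Int.two_mul_ediv_two_of_even (hEv x)
    have := key a b
    have ha := h2 a; have hb := h2 b; have hab := h2 (a * b)
    omega
  · intro x
    rcases cases2 (ε₁ x) with h | h
    · -- f (x*x,1) = 2 * f (x,1), with f (x,1) even
      have hsplit := hf (x, 1) (x, 1) (by simp [h, e2one]) (by simp [h, e2one])
      simp only [Prod.mk_mul_mk, mul_one] at hsplit
      have hev : Even (f (x, 1)) := (hpar (x, 1) (by simp [h, e2one])).2 h
      rw [Int.even_iff] at hev ⊢
      have h2 := Int.two_mul_ediv_two_of_even (hEv x)
      simp only [h, iff_true]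
      omega
    · -- ε₁ x = 1 : f (x*x,1) = 2 f (x,v) - f (1,v*v), f (x,v) odd
      have hxv : ε₁ x = ε₂ v := by rw [h, hv]
      have hsq := hf (x, v) (x, v) hxv hxv
      simp only [Prod.mk_mul_mk] at hsq
      have hsplit := hf (x * x, 1) (1, v * v) (by simp [ed1, e2one]) (by simp [e1one, ed2])
      simp only [Prod.mk_mul_mk, one_mul, mul_one] at hsplit
      have hodd : ¬ Even (f (x, v)) := by
        rw [hpar (x, v) hxv, h]; decide
      have h2 := Int.two_mul_ediv_two_of_even (hEv x)
      rw [Int.even_iff] at hodd ⊢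
      have hne : ¬ ((1 : ZMod 2) = 0) := by decide
      simp only [h, hne, iff_false]
      omega

/-- Let `ε₁ : G₁ → ℤ/2` and `ε₂ : G₂ → ℤ/2` be surjective group homomorphisms and let
`P = {(x, y) : ε₁ x = ε₂ y} ≤ G₁ × G₂`. If `f` restricts to a group homomorphism
`P → ℤ` such that for `(x, y) ∈ P`, `f (x, y)` is even iff `ε₁ x = 0`, then `G₁` or
`G₂` admits a group homomorphism to `ℤ` whose even part is exactly the kernel of the
corresponding parity homomorphism. -/
theorem stmt9 {G₁ G₂ : Type*} [Group G₁] [Group G₂]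
    (ε₁ : G₁ → ZMod 2) (ε₂ : G₂ → ZMod 2)
    (hε₁ : ∀ a b : G₁, ε₁ (a * b) = ε₁ a + ε₁ b)
    (hε₂ : ∀ a b : G₂, ε₂ (a * b) = ε₂ a + ε₂ b)
    (hs₁ : Function.Surjective ε₁) (hs₂ : Function.Surjective ε₂)
    (f : G₁ × G₂ → ℤ)
    (hf : ∀ p q : G₁ × G₂, ε₁ p.1 = ε₂ p.2 → ε₁ q.1 = ε₂ q.2 → f (p * q) = f p + f q)
    (hpar : ∀ p : G₁ × G₂, ε₁ p.1 = ε₂ p.2 → (Even (f p) ↔ ε₁ p.1 = 0)) :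
    (∃ g : G₁ → ℤ, (∀ a b : G₁, g (a * b) = g a + g b) ∧
      ∀ x : G₁, Even (g x) ↔ ε₁ x = 0) ∨
    (∃ g : G₂ → ℤ, (∀ a b : G₂, g (a * b) = g a + g b) ∧
      ∀ y : G₂, Even (g y) ↔ ε₂ y = 0) := by
  obtain ⟨u, hu⟩ := hs₁ 1
  obtain ⟨v, hv⟩ := hs₂ 1
  have two : ∀ a : ZMod 2, a + a = 0 := by decide
  have e1one : ε₁ (1 : G₁) = 0 := by
    have h := hε₁ 1 1
    rw [one_mul] at h
    have h2 : ∀ a : ZMod 2, a = a + a → a = 0 := by decide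
    exact h2 _ h
  have e2one : ε₂ (1 : G₂) = 0 := by
    have h := hε₂ 1 1
    rw [one_mul] at h
    have h2 : ∀ a : ZMod 2, a = a + a → a = 0 := by decide
    exact h2 _ h
  have ed1 : ∀ x : G₁, ε₁ (x * x) = 0 := fun x => by rw [hε₁]; exact two _
  have ed2 : ∀ y : G₂, ε₂ (y * y) = 0 := fun y => by rw [hε₂]; exact two _
  have huv : ε₁ u = ε₂ v := by rw [hu, hv]
  -- f (u*u, 1) + f (1, v*v) = 2 * f (u, v), with f (u, v) odd
  have hsq := hf (u, v) (u, v) huv huv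
  simp only [Prod.mk_mul_mk] at hsq
  have hsplit := hf (u * u, 1) (1, v * v) (by simp [ed1, e2one]) (by simp [e1one, ed2])
  simp only [Prod.mk_mul_mk, one_mul, mul_one] at hsplit
  have hodd : ¬ Even (f (u, v)) := by
    rw [hpar (u, v) huv, hu]; decide
  have hcEv : Even (f ((1 : G₁), v * v)) := by
    refine (hpar (1, v * v) (by simp [e1one, ed2])).2 e1one
  have hdEv : Even (f ((u * u : G₁), (1 : G₂))) := by
    refine (hpar (u * u, 1) (by simp [ed1, e2one])).2 (ed1 u)
  rw [Int.even_iff] at hcEv hdEv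
  rw [Int.even_iff] at hodd
  by_cases hc : f ((1 : G₁), v * v) % 4 = 0
  · exact Or.inl (auxstmt9 ε₁ ε₂ hε₁ hε₂ f hf hpar v hv hc)
  · have hd : f ((u * u : G₁), (1 : G₂)) % 4 = 0 := by omega
    refine Or.inr ?_
    exact auxstmt9 ε₂ ε₁ hε₂ hε₁ (fun p => f (p.2, p.1))
      (fun p q h1 h2 => hf (p.2, p.1) (q.2, q.1) h1.symm h2.symm)
      (fun p h => by rw [hpar (p.2, p.1) h.symm, h])
      u hu hd
end

section
/- Let G₁ and G₂ be groups with group homomorphisms ε₁ : G₁ → ℤ/2ℤ and ε₂ : G₂ → ℤ/2ℤ such that ε₂ is surjective, and let P be the subgroup {(x, y) ∈ G₁ × G₂ : ε₁(x) = ε₂(y)} of G₁ × G₂. Then for all x₁, x₂ ∈ G₁, the element ([x₁, x₂], 1) of G₁ × G₂ (where [x₁, x₂] denotes the commutator and 1 is the identity of G₂) belongs to the commutator subgroup of P. -/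
open scoped commutatorElement

/-- Let `ε₁ : G₁ → ℤ/2` and `ε₂ : G₂ → ℤ/2` be group homomorphisms with `ε₂`
surjective, and let `P = {(x, y) : ε₁ x = ε₂ y} ≤ G₁ × G₂`. Then for all
`x₁, x₂ : G₁`, the element `(⁅x₁, x₂⁆, 1)` of `G₁ × G₂` belongs to the commutator
subgroup of `P` (viewed inside `G₁ × G₂` via the inclusion `P.subtype`). -/
theorem stmt10 {G₁ G₂ : Type*} [Group G₁] [Group G₂]
    (ε₁ : G₁ → ZMod 2) (ε₂ : G₂ → ZMod 2)
    (hε₁ : ∀ a b : G₁, ε₁ (a * b) = ε₁ a + ε₁ b)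
    (hε₂ : ∀ a b : G₂, ε₂ (a * b) = ε₂ a + ε₂ b)
    (hs₂ : Function.Surjective ε₂)
    (P : Subgroup (G₁ × G₂))
    (hP : ∀ p : G₁ × G₂, p ∈ P ↔ ε₁ p.1 = ε₂ p.2) :
    ∀ x₁ x₂ : G₁,
      ((⁅x₁, x₂⁆, (1 : G₂)) : G₁ × G₂) ∈ (commutator ↥P).map P.subtype := by
  intro x₁ x₂
  obtain ⟨g, hg⟩ := hs₂ 1
  have h1 : ε₂ (1 : G₂) = 0 := by
    have := hε₂ 1 1
    simpa using this
  set y : ZMod 2 → G₂ := fun c => if c = 0 then 1 else g with hy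
  have hyc : ∀ c : ZMod 2, ε₂ (y c) = c := by
    intro c
    by_cases hc : c = 0
    · simp [hy, hc, h1]
    · have hor : ∀ d : ZMod 2, d = 0 ∨ d = 1 := by decide
      have : c = 1 := (hor c).resolve_left hc
      simp [hy, hc, this, hg]
  have h₁ : ((x₁, y (ε₁ x₁)) : G₁ × G₂) ∈ P := by rw [hP]; simp [hyc]
  have h₂ : ((x₂, y (ε₁ x₂)) : G₁ × G₂) ∈ P := by rw [hP]; simp [hyc]
  have hcomm : y (ε₁ x₁) * y (ε₁ x₂) = y (ε₁ x₂) * y (ε₁ x₁) := by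
    by_cases h : ε₁ x₁ = 0 <;> by_cases h' : ε₁ x₂ = 0 <;> simp [hy, h, h']
  rw [Subgroup.mem_map]
  set q₁ : ↥P := ⟨_, h₁⟩ with hq₁
  set q₂ : ↥P := ⟨_, h₂⟩ with hq₂
  have hc12 : ⁅q₁, q₂⁆ ∈ commutator ↥P :=
    Subgroup.commutator_mem_commutator (Subgroup.mem_top _) (Subgroup.mem_top _)
  refine ⟨_, hc12, ?_⟩
  show ((x₁, y (ε₁ x₁)) : G₁ × G₂) * (x₂, y (ε₁ x₂)) *
      ((x₁, y (ε₁ x₁)) : G₁ × G₂)⁻¹ * ((x₂, y (ε₁ x₂)) : G₁ × G₂)⁻¹ = _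
  ext
  · rfl
  · show y (ε₁ x₁) * y (ε₁ x₂) * (y (ε₁ x₁))⁻¹ * (y (ε₁ x₂))⁻¹ = 1
    rw [hcomm]
    group
end

section
/- Let G₁ and G₂ be groups with group homomorphisms ε₁ : G₁ → ℤ/2ℤ and ε₂ : G₂ → ℤ/2ℤ such that ε₂ is surjective, let P be the subgroup {(x, y) ∈ G₁ × G₂ : ε₁(x) = ε₂(y)} of G₁ × G₂, and let f : P → ℤ be a group homomorphism. Then the function x ↦ f(x², 1) on G₁ is additive: for all x₁, x₂ ∈ G₁, f((x₁x₂)², 1) = f(x₁², 1) + f(x₂², 1). (Note (x², 1) ∈ P for every x ∈ G₁ since ε₁(x²) = 0.) -/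
/-- Let `ε₁ : G₁ → ℤ/2` and `ε₂ : G₂ → ℤ/2` be group homomorphisms with `ε₂`
surjective, let `P = {(x, y) : ε₁ x = ε₂ y} ≤ G₁ × G₂`, and let `f` restrict to a
group homomorphism `P → ℤ`. Then `x ↦ f (x², 1)` is additive on `G₁`:
`f ((x₁x₂)², 1) = f (x₁², 1) + f (x₂², 1)`. (Note `(x², 1) ∈ P` since `ε₁ (x²) = 0`.) -/
theorem stmt11 {G₁ G₂ : Type*} [Group G₁] [Group G₂]
    (ε₁ : G₁ → ZMod 2) (ε₂ : G₂ → ZMod 2)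
    (hε₁ : ∀ a b : G₁, ε₁ (a * b) = ε₁ a + ε₁ b)
    (hε₂ : ∀ a b : G₂, ε₂ (a * b) = ε₂ a + ε₂ b)
    (hs₂ : Function.Surjective ε₂)
    (f : G₁ × G₂ → ℤ)
    (hf : ∀ p q : G₁ × G₂, ε₁ p.1 = ε₂ p.2 → ε₁ q.1 = ε₂ q.2 → f (p * q) = f p + f q) :
    ∀ x₁ x₂ : G₁,
      f ((x₁ * x₂) ^ 2, (1 : G₂)) = f (x₁ ^ 2, (1 : G₂)) + f (x₂ ^ 2, (1 : G₂)) := by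
  have htwo : ∀ c : ZMod 2, c + c = 0 := by decide
  have hneg : ∀ c : ZMod 2, -c = c := by decide
  have h₁1 : ε₁ 1 = 0 := by
    have h := hε₁ 1 1; rw [one_mul] at h; exact (left_eq_add.mp h)
  have h₂1 : ε₂ 1 = 0 := by
    have h := hε₂ 1 1; rw [one_mul] at h; exact (left_eq_add.mp h)
  have h₁inv : ∀ a : G₁, ε₁ a⁻¹ = ε₁ a := by
    intro a
    have h := hε₁ a a⁻¹
    rw [mul_inv_cancel, h₁1] at h
    rw [← hneg (ε₁ a), eq_comm, neg_eq_iff_add_eq_zero]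
    exact h.symm
  have h₂inv : ∀ a : G₂, ε₂ a⁻¹ = ε₂ a := by
    intro a
    have h := hε₂ a a⁻¹
    rw [mul_inv_cancel, h₂1] at h
    rw [← hneg (ε₂ a), eq_comm, neg_eq_iff_add_eq_zero]
    exact h.symm
  -- f of the identity
  have f1 : f (1, (1 : G₂)) = 0 := by
    have h := hf (1, 1) (1, 1) (by simp [h₁1, h₂1]) (by simp [h₁1, h₂1])
    simp only [Prod.mk_mul_mk, mul_one] at h
    omega
  -- f of inverses
  have finv : ∀ (a : G₁) (b : G₂), ε₁ a = ε₂ b → f (a⁻¹, b⁻¹) = - f (a, b) := by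
    intro a b hab
    have h := hf (a, b) (a⁻¹, b⁻¹) hab (by simpa [h₁inv, h₂inv] using hab)
    simp only [Prod.mk_mul_mk, mul_inv_cancel] at h
    rw [f1] at h
    omega
  -- f vanishes on commutators of P
  have fcomm : ∀ (a c : G₁) (b d : G₂), ε₁ a = ε₂ b → ε₁ c = ε₂ d →
      f (a⁻¹ * c * a * c⁻¹, b⁻¹ * d * b * d⁻¹) = 0 := by
    intro a c b d hab hcd
    have mab : ε₁ a⁻¹ = ε₂ b⁻¹ := by simpa [h₁inv, h₂inv] using hab
    have mcd : ε₁ c⁻¹ = ε₂ d⁻¹ := by simpa [h₁inv, h₂inv] using hcd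
    have m1 : ε₁ (a⁻¹ * c) = ε₂ (b⁻¹ * d) := by
      rw [hε₁, hε₂, mab, hcd]
    have m2 : ε₁ (a⁻¹ * c * a) = ε₂ (b⁻¹ * d * b) := by
      rw [hε₁, hε₂, m1, hab]
    have h1 := hf (a⁻¹ * c * a, b⁻¹ * d * b) (c⁻¹, d⁻¹) m2 mcd
    have h2 := hf (a⁻¹ * c, b⁻¹ * d) (a, b) m1 hab
    have h3 := hf (a⁻¹, b⁻¹) (c, d) mab hcd
    simp only [Prod.mk_mul_mk] at h1 h2 h3
    rw [h1, h2, h3, finv a b hab, finv c d hcd]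
    ring
  intro x₁ x₂
  obtain ⟨y₁, hy₁⟩ := hs₂ (ε₁ x₁)
  obtain ⟨y₂, hy₂⟩ := hs₂ (ε₁ x₂)
  simp only [pow_two]
  -- memberships
  have m1 : ε₁ x₁ = ε₂ y₁ := hy₁.symm
  have m2 : ε₁ x₂ = ε₂ y₂ := hy₂.symm
  have m12 : ε₁ (x₁ * x₂) = ε₂ (y₁ * y₂) := by rw [hε₁, hε₂, m1, m2]
  have msq : ∀ (a : G₁) (b : G₂), ε₁ a = ε₂ b → ε₁ (a * a) = ε₂ (b * b) := by
    intro a b hab; rw [hε₁, hε₂, hab]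
  have mker : ∀ b : G₂, ε₂ (b * b) = 0 := by intro b; rw [hε₂]; exact htwo _
  have mkerinv : ∀ b : G₂, ε₂ ((b * b)⁻¹) = 0 := by
    intro b; rw [h₂inv]; exact mker b
  -- splitting f (a*a, 1) = f (a*a, b*b) + f (1, (b*b)⁻¹)
  have split : ∀ (a : G₁) (b : G₂), ε₁ a = ε₂ b →
      f (a * a, (1 : G₂)) = f (a * a, b * b) + f (1, (b * b)⁻¹) := by
    intro a b hab
    have h := hf (a * a, b * b) (1, (b * b)⁻¹) (msq a b hab)
      (by simpa [h₁1] using (mkerinv b).symm)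
    simp only [Prod.mk_mul_mk, mul_one, mul_inv_cancel] at h
    exact h
  -- doubling
  have dbl : ∀ (a : G₁) (b : G₂), ε₁ a = ε₂ b →
      f (a * a, b * b) = f (a, b) + f (a, b) := by
    intro a b hab
    have h := hf (a, b) (a, b) hab hab
    simpa only [Prod.mk_mul_mk] using h
  -- the commutator in the second factor is killed by f
  have key : f ((1 : G₁), y₁⁻¹ * y₂ * y₁ * y₂⁻¹) = 0 := by
    have tri : ∀ a b : ZMod 2, a = b ∨ a = 0 ∨ b = 0 := by decide
    rcases tri (ε₁ x₁) (ε₁ x₂) with h | h | h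
    · have h2 : ε₁ x₁ = ε₂ y₂ := by rw [h, m2]
      have hc := fcomm x₁ x₁ y₁ y₂ m1 h2
      have e : x₁⁻¹ * x₁ * x₁ * x₁⁻¹ = 1 := by group
      rwa [e] at hc
    · have h1 : ε₁ (1 : G₁) = ε₂ y₁ := by rw [h₁1, ← m1, h]
      have hc := fcomm 1 x₂ y₁ y₂ h1 m2
      have e : (1 : G₁)⁻¹ * x₂ * 1 * x₂⁻¹ = 1 := by group
      rwa [e] at hc
    · have h2 : ε₁ (1 : G₁) = ε₂ y₂ := by rw [h₁1, ← m2, h]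
      have hc := fcomm x₁ 1 y₁ y₂ m1 h2
      have e : x₁⁻¹ * 1 * x₁ * (1 : G₁)⁻¹ = 1 := by group
      rwa [e] at hc
  -- additivity of b ↦ f (1, b*b) on the chosen lifts
  have W : f ((1 : G₁), (y₁ * y₂) * (y₁ * y₂)) = f (1, y₁ * y₁) + f (1, y₂ * y₂) := by
    have mc : ε₂ (y₁⁻¹ * y₂ * y₁ * y₂⁻¹) = 0 := by
      simp only [hε₂, h₂inv]
      rw [show ε₂ y₁ + ε₂ y₂ + ε₂ y₁ + ε₂ y₂ = (ε₂ y₁ + ε₂ y₁) + (ε₂ y₂ + ε₂ y₂) by ring,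
        htwo, htwo, add_zero]
    have s2 := hf (1, y₁⁻¹ * y₂ * y₁ * y₂⁻¹) (1, y₂ * y₂)
      (by simpa [h₁1] using mc.symm) (by simpa [h₁1] using (mker y₂).symm)
    have s1 := hf (1, y₁ * y₁) (1, (y₁⁻¹ * y₂ * y₁ * y₂⁻¹) * (y₂ * y₂))
      (by simpa [h₁1] using (mker y₁).symm)
      (by
        have : ε₂ ((y₁⁻¹ * y₂ * y₁ * y₂⁻¹) * (y₂ * y₂)) = 0 := by
          rw [hε₂, mc, mker, add_zero]
        simpa [h₁1] using this.symm)
    simp only [Prod.mk_mul_mk, mul_one, one_mul] at s1 s2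
    rw [show (y₁ * y₁) * ((y₁⁻¹ * y₂ * y₁ * y₂⁻¹) * (y₂ * y₂)) = (y₁ * y₂) * (y₁ * y₂) by
      group] at s1
    rw [s1, s2, key]
    ring
  -- put everything together
  have e1 := split x₁ y₁ m1
  have e2 := split x₂ y₂ m2
  have e12 := split (x₁ * x₂) (y₁ * y₂) m12
  have d1 := dbl x₁ y₁ m1
  have d2 := dbl x₂ y₂ m2
  have d12 := dbl (x₁ * x₂) (y₁ * y₂) m12
  have hpq := hf (x₁, y₁) (x₂, y₂) m1 m2
  simp only [Prod.mk_mul_mk] at hpq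
  have i1 := finv 1 (y₁ * y₁) (by simpa [h₁1] using (mker y₁).symm)
  have i2 := finv 1 (y₂ * y₂) (by simpa [h₁1] using (mker y₂).symm)
  have i12 := finv 1 ((y₁ * y₂) * (y₁ * y₂))
    (by simpa [h₁1] using (mker (y₁ * y₂)).symm)
  simp only [inv_one] at i1 i2 i12
  rw [e1, e2, e12, d1, d2, d12, hpq, i1, i2, i12, W]
  ring
end

section
/- Let (K, α) and (L, β) be Z₂-simplicial complexes on vertex types V and W, and let G be a graph. Then there exists a graph homomorphism from the tensor product A(K, α) × A(L, β) to G if and only if there exists a Z₂-simplicial map from the product complex (K × L, α × β) to the box complex B(G). -/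
/-- The product `K × L` of simplicial complexes: simplices are the nonempty finite
subsets of `V × W` whose two projections are simplices of `K` and `L` respectively. -/
def ProdCpx {V W : Type*} [DecidableEq V] [DecidableEq W]
    (K : Set (Finset V)) (L : Set (Finset W)) : Set (Finset (V × W)) :=
  {σ | σ.Nonempty ∧ σ.image Prod.fst ∈ K ∧ σ.image Prod.snd ∈ L}

/-- There exists a graph homomorphism from the tensor product `A(K, α) × A(L, β)` to a
graph `G = (U, E)` if and only if there exists a Z₂-simplicial map from the product
complex `(K × L, α × β)` to the box complex `B(G)`. -/
theorem stmt17 {V W U : Type*} [DecidableEq V] [DecidableEq W] [DecidableEq U]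
    (K : Set (Finset V)) (α : V → V) (hK : IsZ2Complex K α)
    (L : Set (Finset W)) (β : W → W) (hL : IsZ2Complex L β)
    (E : U → U → Prop) (hE : ∀ a b : U, E a b → E b a) :
    (∃ f : V × W → U, ∀ p q : V × W,
        ({α p.1, q.1} : Finset V) ∈ K → ({β p.2, q.2} : Finset W) ∈ L →
        E (f p) (f q)) ↔
    (∃ g : V × W → U × U,
        IsZ2Map (ProdCpx K L) (Prod.map α β) (BoxCpx E) Prod.swap g) := by
  obtain ⟨⟨hne, hsub, hsing⟩, hαα, hαK⟩ := hK
  obtain ⟨⟨hneL, hsubL, hsingL⟩, hββ, hβL⟩ := hL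
  constructor
  · rintro ⟨f, hf⟩
    refine ⟨fun p => (f (α p.1, β p.2), f p), ?_, ?_⟩
    · rintro σ ⟨hσne, hσ1, hσ2⟩
      refine ⟨hσne.image _, ?_⟩
      intro x hx y hy
      simp only [Finset.mem_image] at hx hy
      obtain ⟨p, hp, rfl⟩ := hx
      obtain ⟨q, hq, rfl⟩ := hy
      have pairK : ∀ a b : V × W, a ∈ σ → b ∈ σ → ({a.1, b.1} : Finset V) ∈ K := by
        intro a b ha hb
        refine hsub _ hσ1 _ ?_ ⟨a.1, by simp⟩
        intro x hx
        simp only [Finset.mem_insert, Finset.mem_singleton] at hx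
        rcases hx with rfl | rfl
        · exact Finset.mem_image_of_mem _ ha
        · exact Finset.mem_image_of_mem _ hb
      have pairL : ∀ a b : V × W, a ∈ σ → b ∈ σ → ({a.2, b.2} : Finset W) ∈ L := by
        intro a b ha hb
        refine hsubL _ hσ2 _ ?_ ⟨a.2, by simp⟩
        intro x hx
        simp only [Finset.mem_insert, Finset.mem_singleton] at hx
        rcases hx with rfl | rfl
        · exact Finset.mem_image_of_mem _ ha
        · exact Finset.mem_image_of_mem _ hb
      constructor
      · exact hf (α p.1, β p.2) q (by simpa [hαα] using pairK p q hp hq)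
          (by simpa [hββ] using pairL p q hp hq)
      · exact hf (α q.1, β q.2) p (by simpa [hαα] using pairK q p hq hp)
          (by simpa [hββ] using pairL q p hq hp)
    · intro v
      simp [Prod.map, hαα, hββ, Prod.swap]
  · rintro ⟨g, hg, hcomm⟩
    refine ⟨fun p => (g p).2, ?_⟩
    intro p q hKp hLp
    have hσ : ({(α p.1, β p.2), q} : Finset (V × W)) ∈ ProdCpx K L := by
      refine ⟨⟨q, by simp⟩, ?_, ?_⟩
      · simpa using hKp
      · simpa using hLp
    obtain ⟨-, hb⟩ := hg _ hσ
    have h1 : g (α p.1, β p.2) ∈ Finset.image g {(α p.1, β p.2), q} :=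
      Finset.mem_image_of_mem _ (by simp)
    have h2 : g q ∈ Finset.image g {(α p.1, β p.2), q} :=
      Finset.mem_image_of_mem _ (by simp)
    have key := (hb _ h1 _ h2).1
    have hs : g (α p.1, β p.2) = Prod.swap (g p) := hcomm p
    rw [hs] at key
    exact key
end
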